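/- Dimension bound: Let Γ be a group of affine maps of ℝⁿ of the form (I+A,v) where each A is skew-symmetric with respect to a nondegenerate symmetric bilinear form, A² = 0, triple products of the A's vanish (A₁A₂A₃=0), and (A₁+A₂)² = 0 for sums of any two. If there exist elements with A₁A₂ ≠ 0, then n ≥ 8. -/

import Mathlib

/-- Dimension bound: let `Γ` be a group of affine isometries `(I+A, v)` of a
nondegenerate symmetric bilinear form on `ℝⁿ`, with each `A` skew-symmetric,
`A² = 0`, vanishing triple products `A₁A₂A₃ = 0`, and `(A₁+A₂)² = 0` for any
two elements. If `A₁A₂ ≠ 0` for some pair (non-abelian linear holonomy), then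
`n ≥ 8`. -/
theorem stmt11 {n : ℕ}
    (B : LinearMap.BilinForm ℝ (Fin n → ℝ))
    (hsymm : ∀ x y, B x y = B y x)
    (hnd : B.Nondegenerate)
    (Γ : Subgroup ((Fin n → ℝ) ≃ᵃ[ℝ] (Fin n → ℝ)))
    (A : ((Fin n → ℝ) ≃ᵃ[ℝ] (Fin n → ℝ)) → ((Fin n → ℝ) →ₗ[ℝ] (Fin n → ℝ)))
    (hA : ∀ γ, A γ = (γ.linear : (Fin n → ℝ) →ₗ[ℝ] (Fin n → ℝ)) - LinearMap.id)
    (hiso : ∀ γ ∈ Γ, ∀ x y, B (γ.linear x) (γ.linear y) = B x y)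
    (hskew : ∀ γ ∈ Γ, ∀ x y, B (A γ x) y = - B x (A γ y))
    (hA2 : ∀ γ ∈ Γ, A γ ∘ₗ A γ = 0)
    (htriple : ∀ γ₁ ∈ Γ, ∀ γ₂ ∈ Γ, ∀ γ₃ ∈ Γ, A γ₁ ∘ₗ A γ₂ ∘ₗ A γ₃ = 0)
    (hsum : ∀ γ₁ ∈ Γ, ∀ γ₂ ∈ Γ, (A γ₁ + A γ₂) ∘ₗ (A γ₁ + A γ₂) = 0)
    (hnonab : ∃ γ₁ ∈ Γ, ∃ γ₂ ∈ Γ, A γ₁ ∘ₗ A γ₂ ≠ 0) :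
    8 ≤ n := by
  obtain ⟨γ₁, hγ₁, γ₂, hγ₂, hne⟩ := hnonab
  set C := A γ₁ with hCdef
  set D := A γ₂ with hDdef
  set P : (Fin n → ℝ) →ₗ[ℝ] (Fin n → ℝ) := C ∘ₗ D with hPdef
  -- pointwise operator identities
  have hCDpt : ∀ z, C (D z) = P z := fun _ => rfl
  have hCC : ∀ z, C (C z) = 0 := fun z => by
    have := LinearMap.ext_iff.mp (hA2 γ₁ hγ₁) z; simpa using this
  have hDD : ∀ z, D (D z) = 0 := fun z => by
    have := LinearMap.ext_iff.mp (hA2 γ₂ hγ₂) z; simpa using this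
  have hDCpt : ∀ z, D (C z) = -(P z) := by
    intro z
    have h := LinearMap.ext_iff.mp (hsum γ₁ hγ₁ γ₂ hγ₂) z
    simp only [LinearMap.comp_apply, LinearMap.add_apply, LinearMap.zero_apply,
      map_add] at h
    rw [hCC z, hDD z, hCDpt z] at h
    have h' : D (C z) + P z = 0 := by
      have h'' : (0 : Fin n → ℝ) + D (C z) + (P z + 0) = 0 := h
      rw [zero_add, add_zero] at h''
      exact h''
    rw [add_eq_zero_iff_eq_neg] at h'
    exact h'
  have hPC : ∀ z, P (C z) = 0 := by
    intro z
    have h := LinearMap.ext_iff.mp (htriple γ₁ hγ₁ γ₂ hγ₂ γ₁ hγ₁) z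
    exact h
  have hDP : ∀ z, D (P z) = 0 := by
    intro z
    have h := LinearMap.ext_iff.mp (htriple γ₂ hγ₂ γ₁ hγ₁ γ₂ hγ₂) z
    exact h
  have hPD : ∀ z, P (D z) = 0 := by
    intro z
    show C (D (D z)) = 0
    rw [hDD z, map_zero]
  have hPP : ∀ z, P (P z) = 0 := by
    intro z; show C (D (P z)) = 0; rw [hDP z, map_zero]
  have hCP : ∀ z, C (P z) = 0 := by
    intro z; show C (C (D z)) = 0; exact hCC (D z)
  -- skewness of P
  have hskC : ∀ z w, B (C z) w = - B z (C w) := hskew γ₁ hγ₁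
  have hskD : ∀ z w, B (D z) w = - B z (D w) := hskew γ₂ hγ₂
  have hskP : ∀ z w, B (P z) w = - B z (P w) := by
    intro z w
    have e1 : B (P z) w = B (C (D z)) w := by rw [hCDpt]
    rw [e1, hskC, hskD]
    have e2 : B z (D (C w)) = B z (-(P w)) := by rw [hDCpt]
    rw [neg_neg, e2, map_neg]
  -- B values
  have hBPC : ∀ z w, B (P z) (C w) = 0 := fun z w => by
    rw [hskP, hPC, map_zero, neg_zero]
  have hBPD : ∀ z w, B (P z) (D w) = 0 := fun z w => by
    rw [hskP, hPD, map_zero, neg_zero]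
  have hBPP : ∀ z w, B (P z) (P w) = 0 := fun z w => by
    rw [hskP, hPP, map_zero, neg_zero]
  have hBPz : ∀ z, B (P z) z = 0 := fun z => by
    have h1 := hskP z z
    have h2 := hsymm (P z) z
    linarith
  -- choose witnesses
  obtain ⟨x, hx⟩ : ∃ x, P x ≠ 0 := by
    by_contra h; push_neg at h
    exact hne (LinearMap.ext fun z => by simpa using h z)
  obtain ⟨y, hβ⟩ : ∃ y, B (P x) y ≠ 0 := by
    by_contra h; push_neg at h
    exact hx (hnd.1 (P x) h)
  have hPyx : B (P y) x = - B (P x) y := by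
    rw [hskP, hsymm]
  have hPy : P y ≠ 0 := by
    intro h
    rw [h, map_zero] at hPyx
    simp only [LinearMap.zero_apply] at hPyx
    exact hβ (by linarith)
  -- linear independence of the 8 vectors
  have hli : LinearIndependent ℝ ![x, C x, D x, P x, y, C y, D y, P y] := by
    rw [Fintype.linearIndependent_iff]
    intro g hg
    rw [Fin.sum_univ_eight] at hg
    have hg : g 0 • x + g 1 • C x + g 2 • D x + g 3 • P x + g 4 • y +
        g 5 • C y + g 6 • D y + g 7 • P y = 0 := hg
    have h4 : g 4 = 0 := by
      have h := congrArg (fun v => B (P x) v) hg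
      simp only [map_add, map_smul, map_zero, smul_eq_mul, hBPz, hBPC, hBPD, hBPP,
        mul_zero, add_zero, zero_add] at h
      rcases mul_eq_zero.mp h with h' | h'
      · exact h'
      · exact absurd h' hβ
    have h0 : g 0 = 0 := by
      have h := congrArg (fun v => B (P y) v) hg
      simp only [map_add, map_smul, map_zero, smul_eq_mul, hBPz, hBPC, hBPD, hBPP,
        hPyx, mul_neg, mul_zero, add_zero, zero_add, neg_eq_zero] at h
      rcases mul_eq_zero.mp h with h' | h'
      · exact h'
      · exact absurd h' hβ
    simp only [h0, h4, zero_smul, zero_add, add_zero] at hg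
    -- apply C
    have hgC : g 2 • P x + g 6 • P y = 0 := by
      have h := congrArg (fun v => C v) hg
      simpa only [map_add, map_smul, map_zero, hCC, hCDpt, hCP, smul_zero,
        zero_add, add_zero] using h
    have h2 : g 2 = 0 := by
      have h := congrArg (fun v => B v y) hgC
      simp only [map_add, map_smul, map_zero, LinearMap.add_apply,
        LinearMap.smul_apply, LinearMap.zero_apply, smul_eq_mul, hBPz,
        mul_zero, add_zero] at h
      rcases mul_eq_zero.mp h with h' | h'
      · exact h'
      · exact absurd h' hβ
    have h6 : g 6 = 0 := by
      rw [h2, zero_smul, zero_add] at hgC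
      rcases smul_eq_zero.mp hgC with h' | h'
      · exact h'
      · exact absurd h' hPy
    simp only [h2, h6, zero_smul, zero_add, add_zero] at hg
    -- apply D
    have hgD : -(g 1 • P x) + -(g 5 • P y) = 0 := by
      have h := congrArg (fun v => D v) hg
      simpa only [map_add, map_smul, map_zero, hDCpt, hDP, smul_neg, smul_zero,
        zero_add, add_zero] using h
    have h1 : g 1 = 0 := by
      have h := congrArg (fun v => B v y) hgD
      simp only [map_add, map_neg, map_smul, map_zero, LinearMap.add_apply,
        LinearMap.neg_apply, LinearMap.smul_apply, LinearMap.zero_apply,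
        smul_eq_mul, hBPz, mul_zero, neg_zero, add_zero, neg_eq_zero] at h
      rcases mul_eq_zero.mp h with h' | h'
      · exact h'
      · exact absurd h' hβ
    have h5 : g 5 = 0 := by
      rw [h1, zero_smul, neg_zero, zero_add, neg_eq_zero] at hgD
      rcases smul_eq_zero.mp hgD with h' | h'
      · exact h'
      · exact absurd h' hPy
    simp only [h1, h5, zero_smul, zero_add, add_zero] at hg
    -- hg : g 3 • P x + g 7 • P y = 0
    have h3 : g 3 = 0 := by
      have h := congrArg (fun v => B v y) hg
      simp only [map_add, map_smul, map_zero, LinearMap.add_apply,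
        LinearMap.smul_apply, LinearMap.zero_apply, smul_eq_mul, hBPz,
        mul_zero, add_zero] at h
      rcases mul_eq_zero.mp h with h' | h'
      · exact h'
      · exact absurd h' hβ
    have h7 : g 7 = 0 := by
      rw [h3, zero_smul, zero_add] at hg
      rcases smul_eq_zero.mp hg with h' | h'
      · exact h'
      · exact absurd h' hPy
    intro i
    fin_cases i <;> assumption
  have hcard := hli.fintype_card_le_finrank
  simpa using hcard
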